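/- Let I ⊆ ℝ be an interval and let X, Z : I → ℝ be differentiable functions with Z > 0 on I satisfying the reduced system X'(η) = (1/β) X(η)(X(η) − (m−1)α Z(η)) and Z'(η) = (2/β) X(η) Z(η) for all η ∈ I. Then the function η ↦ (X(η) + (m−1)α Z(η))/√(Z(η)) is constant on I; equivalently, there exists K ∈ ℝ such that X(η) = K √(Z(η)) − (m−1)α Z(η) for all η ∈ I. -/

import Mathlib

open Real Filter Set Topology

noncomputable def alphaC (m p σ : ℝ) : ℝ := (σ + 2) / (σ * (m - 1) + 2 * (p - 1))

noncomputable def betaC (m p σ : ℝ) : ℝ := (m - p) / (σ * (m - 1) + 2 * (p - 1))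

lemma first_integral_deriv_key (x z s b c : ℝ) (hs : s ≠ 0) (hsq : s * s = z) :
    ((1 / b * x * (x - c * z) + c * (2 / b * x * z)) * s -
        (x + c * z) * (1 / (2 * s) * (2 / b * x * z))) / s ^ 2 = 0 := by
  subst hsq
  rcases eq_or_ne b 0 with hb | hb
  · simp [hb]
  · field_simp
    ring

theorem reduced_center_manifold_system_first_integral (m p σ : ℝ) (N : ℕ) (hm : 1 < m) (hp0 : 0 < p) (hp1 : p < 1)
    (hσ : 2 * (1 - p) / (m - 1) < σ) (hN : 1 ≤ N)
    (I : Set ℝ) (hI : I.OrdConnected)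
    (X Z : ℝ → ℝ)
    (hZpos : ∀ η ∈ I, 0 < Z η)
    (hdX : ∀ η ∈ I, HasDerivWithinAt X
      (1 / betaC m p σ * X η * (X η - (m - 1) * alphaC m p σ * Z η)) I η)
    (hdZ : ∀ η ∈ I, HasDerivWithinAt Z (2 / betaC m p σ * X η * Z η) I η) :
    ∃ K : ℝ, ∀ η ∈ I, X η = K * Real.sqrt (Z η) - (m - 1) * alphaC m p σ * Z η := by
  rcases I.eq_empty_or_nonempty with hIe | ⟨η₀, hη₀⟩
  · exact ⟨0, by simp [hIe]⟩
  set c := (m - 1) * alphaC m p σ with hc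
  set b := betaC m p σ with hb
  set F : ℝ → ℝ := fun η => (X η + c * Z η) / Real.sqrt (Z η) with hFdef
  have hconv : Convex ℝ I := hI.convex
  have hder : ∀ η ∈ I, HasDerivWithinAt F 0 I η := by
    intro η hη
    have hz := hZpos η hη
    have hspos : 0 < Real.sqrt (Z η) := Real.sqrt_pos.mpr hz
    have hs : Real.sqrt (Z η) ≠ 0 := hspos.ne'
    have hsq : Real.sqrt (Z η) * Real.sqrt (Z η) = Z η := Real.mul_self_sqrt hz.le
    have hds : HasDerivWithinAt (fun η => Real.sqrt (Z η))
        (1 / (2 * Real.sqrt (Z η)) * (2 / b * X η * Z η)) I η :=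
      (Real.hasDerivAt_sqrt hz.ne').comp_hasDerivWithinAt η (hdZ η hη)
    have hnum : HasDerivWithinAt (fun η => X η + c * Z η)
        (1 / b * X η * (X η - c * Z η) + c * (2 / b * X η * Z η)) I η :=
      (hdX η hη).add ((hdZ η hη).const_mul c)
    have h := hnum.div hds hs
    rw [first_integral_deriv_key (X η) (Z η) (Real.sqrt (Z η)) b c hs hsq] at h
    exact h
  obtain ⟨K, hK⟩ : ∃ K : ℝ, ∀ η ∈ I, F η = K := by
    refine ⟨F η₀, fun η hη => ?_⟩
    have hzero : ContinuousLinearMap.toSpanSingleton ℝ (0:ℝ) = 0 := by ext; simp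
    have hbound := hconv.norm_image_sub_le_of_norm_hasFDerivWithin_le
      (C := 0) (f' := fun _ => (0 : ℝ →L[ℝ] ℝ))
      (fun x hx => hzero ▸ (hder x hx).hasFDerivWithinAt)
      (fun x _ => by simp) hη₀ hη
    have : ‖F η - F η₀‖ ≤ 0 := by simpa using hbound
    have := norm_le_zero_iff.mp this
    linarith [sub_eq_zero.mp this]
  refine ⟨K, fun η hη => ?_⟩
  have hz := hZpos η hη
  have hs : Real.sqrt (Z η) ≠ 0 := (Real.sqrt_pos.mpr hz).ne'
  have := hK η hη
  rw [hFdef] at this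
  field_simp at this
  linarith
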